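/- arXiv:2008.05191 — 2 statements merged into one kernel-verified Lean document; each statement's English description precedes it below -/
import Mathlib

section
/- Let K : ℝ^d → [0,∞) be a bounded kernel with sup over all first-order partial derivatives ‖K^{(γ)}‖_∞ < ∞ (|γ| = 1), let h > 0 be fixed, and let X₁,…,Xₙ ∈ ℝ^d be a fixed sample. For a multi-index α ∈ ℕ₀^d define the local sample moment s_n^α(x) := n⁻¹ Σᵢ K_h(Xᵢ − x) h^{−|α|} (Xᵢ − x)^α, where K_h(z) := h^{−d} K(z/h). Then there exists L̃ > 0 (one may take L̃ = max(diam{X₁,…,Xₙ}, 1)² · max(‖K‖_∞, sup_{|γ|=1}‖K^{(γ)}‖_∞) · (3 + h^{−d−1}) up to the paper's bookkeeping; the statement asserts existence) such that |s_n^α(x) − s_n^α(y)| ≤ L̃ ‖x − y‖ for all x, y in the convex hull of X₁,…,Xₙ and all multi-indices α with |α| ≤ 2. -/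
open MeasureTheory Matrix Filter Topology Real

noncomputable section

abbrev E (d : ℕ) := EuclideanSpace ℝ (Fin d)

/-- `s_h(x) = ∫ K(z) f(x+hz) dz` -/
def sH {d : ℕ} (K f : E d → ℝ) (h : ℝ) (x : E d) : ℝ := ∫ z, K z * f (x + h • z)

/-- `s⃗_h(x) = ∫ K(z) z f(x+hz) dz` -/
def sVec {d : ℕ} (K f : E d → ℝ) (h : ℝ) (x : E d) : E d :=
  ∫ z, (K z * f (x + h • z)) • z

/-- `S_h(x) = ∫ K(z) z zᵀ f(x+hz) dz` -/
def sMat {d : ℕ} (K f : E d → ℝ) (h : ℝ) (x : E d) : Matrix (Fin d) (Fin d) ℝ :=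
  fun i j => ∫ z, K z * z i * z j * f (x + h • z)

/-- conditional covariance matrix `Σ_h(x) = h²(s_h(x)⁻¹ S_h(x) − s_h(x)⁻² s⃗_h(x) s⃗_h(x)ᵀ)` -/
def condCov {d : ℕ} (K f : E d → ℝ) (h : ℝ) (x : E d) : Matrix (Fin d) (Fin d) ℝ :=
  h ^ 2 • ((sH K f h x)⁻¹ • sMat K f h x -
    ((sH K f h x) ^ 2)⁻¹ • Matrix.vecMulVec (fun i => sVec K f h x i) (fun i => sVec K f h x i))

/-- Hessian matrix via iterated `fderiv` in coordinate directions -/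
def hessian {d : ℕ} (f : E d → ℝ) (x : E d) : Matrix (Fin d) (Fin d) ℝ :=
  fun i j => fderiv ℝ (fun y => fderiv ℝ f y (EuclideanSpace.single j 1)) x
    (EuclideanSpace.single i 1)

/-- Frobenius norm of a matrix -/
def frobNorm {m n : ℕ} (A : Matrix (Fin m) (Fin n) ℝ) : ℝ :=
  Real.sqrt (∑ i, ∑ j, (A i j) ^ 2)

/-- `V` is an orthogonal matrix whose columns are eigenvectors of `M`
with eigenvalues `lam` listed in decreasing order:  `lam j` is `λ_{j+1}(M)`. -/
def IsEigenDecomp {d : ℕ} (M V : Matrix (Fin d) (Fin d) ℝ) (lam : Fin d → ℝ) : Prop :=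
  Vᵀ * V = 1 ∧ Antitone lam ∧
    ∀ j, M.mulVec (fun i => V i j) = fun i => lam j * V i j

/-- projector `V⊥V⊥ᵀ` onto the span of the eigenvectors `v_{s+1}, …, v_d`
(0-indexed columns `s, …, d-1`). -/
def projPerp {d : ℕ} (s : ℕ) (V : Matrix (Fin d) (Fin d) ℝ) : Matrix (Fin d) (Fin d) ℝ :=
  fun i i' => ∑ j ∈ Finset.univ.filter (fun j : Fin d => s ≤ (j : ℕ)), V i j * V i' j

/-- the map `z'' ↦ V⊥ z''` built from the columns `s, …, d-1` of `W`. -/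
def vperpMap {d : ℕ} (s : ℕ) (W : Matrix (Fin d) (Fin d) ℝ) (z : E (d - s)) : E d :=
  WithLp.toLp 2 (fun i => ∑ j : Fin (d - s), W i ⟨s + (j : ℕ), by have := j.isLt; omega⟩ * z j : Fin d → ℝ)

/-- multiply a `d × m` matrix (columns of `V⊥`) with a vector, landing in `ℝ^d`. -/
def colsMulVec {d m : ℕ} (Vp : Matrix (Fin d) (Fin m) ℝ) (z : E m) : E d :=
  WithLp.toLp 2 (fun i => ∑ j, Vp i j * z j : Fin d → ℝ)

/-- rescaled kernel `K_h(z) = h^{−d} K(z/h)` -/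
def Kh {d : ℕ} (K : E d → ℝ) (h : ℝ) (z : E d) : ℝ := (h ^ d)⁻¹ * K (h⁻¹ • z)

/-- local sample moment `s_n^α(x) = n⁻¹ Σᵢ K_h(Xᵢ − x) h^{−|α|} (Xᵢ − x)^α` -/
def snMoment {d n : ℕ} (K : E d → ℝ) (h : ℝ) (X : Fin n → E d) (α : Fin d → ℕ)
    (x : E d) : ℝ :=
  (n : ℝ)⁻¹ * ∑ i, Kh K h (X i - x) * (h ^ (∑ k, α k))⁻¹ * ∏ k, (X i k - x k) ^ α k

/-- `s_{n,h}(x) = n⁻¹ Σᵢ K_h(Xᵢ − x)` -/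
def snH {d n : ℕ} (K : E d → ℝ) (h : ℝ) (X : Fin n → E d) (x : E d) : ℝ :=
  (n : ℝ)⁻¹ * ∑ i, Kh K h (X i - x)

/-- `s⃗_{n,h}(x) = n⁻¹ Σᵢ K_h(Xᵢ − x) h⁻¹ (Xᵢ − x)` -/
def snVec {d n : ℕ} (K : E d → ℝ) (h : ℝ) (X : Fin n → E d) (x : E d) : Fin d → ℝ :=
  fun k => (n : ℝ)⁻¹ * ∑ i, Kh K h (X i - x) * (h⁻¹ * (X i k - x k))

/-- `S_{n,h}(x) = n⁻¹ Σᵢ K_h(Xᵢ − x) h⁻² (Xᵢ − x)(Xᵢ − x)ᵀ` -/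
def snMat {d n : ℕ} (K : E d → ℝ) (h : ℝ) (X : Fin n → E d) (x : E d) :
    Matrix (Fin d) (Fin d) ℝ :=
  fun k l => (n : ℝ)⁻¹ *
    ∑ i, Kh K h (X i - x) * (h⁻¹ * (X i k - x k)) * (h⁻¹ * (X i l - x l))

/-- local sample variance `Σ̂_{n,h}(x) = h²(S_{n,h}/s_{n,h} − s⃗_{n,h}s⃗_{n,h}ᵀ/s_{n,h}²)` -/
def sampleCov {d n : ℕ} (K : E d → ℝ) (h : ℝ) (X : Fin n → E d) (x : E d) :
    Matrix (Fin d) (Fin d) ℝ :=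
  h ^ 2 • ((snH K h X x)⁻¹ • snMat K h X x -
    ((snH K h X x) ^ 2)⁻¹ • Matrix.vecMulVec (snVec K h X x) (snVec K h X x))


lemma aux_abs_pow_sub_pow_le {a b R ε : ℝ} (m : ℕ) (hR : 1 ≤ R) (ha : |a| ≤ R) (hb : |b| ≤ R)
    (hab : |a - b| ≤ ε) : |a ^ m - b ^ m| ≤ m * R ^ m * ε := by
  have hε : 0 ≤ ε := le_trans (abs_nonneg _) hab
  have hR0 : 0 ≤ R := le_trans zero_le_one hR
  induction m with
  | zero => simp
  | succ m ih =>
    have key : a ^ (m + 1) - b ^ (m + 1) = a * (a ^ m - b ^ m) + (a - b) * b ^ m := by ring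
    have h1 : |a * (a ^ m - b ^ m)| ≤ R * (m * R ^ m * ε) := by
      rw [abs_mul]
      exact mul_le_mul ha ih (abs_nonneg _) hR0
    have h2 : |(a - b) * b ^ m| ≤ ε * R ^ m := by
      rw [abs_mul, abs_pow]
      exact mul_le_mul hab (pow_le_pow_left₀ (abs_nonneg _) hb m) (by positivity) hε
    have hle : R ^ m ≤ R ^ (m + 1) := pow_le_pow_right₀ hR (Nat.le_succ m)
    calc |a ^ (m + 1) - b ^ (m + 1)| ≤ |a * (a ^ m - b ^ m)| + |(a - b) * b ^ m| := by
            rw [key]; exact abs_add_le _ _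
      _ ≤ R * (m * R ^ m * ε) + ε * R ^ m := add_le_add h1 h2
      _ ≤ (↑(m + 1)) * R ^ (m + 1) * ε := by
            push_cast
            calc R * (↑m * R ^ m * ε) + ε * R ^ m
                ≤ R * (↑m * R ^ m * ε) + ε * R ^ (m + 1) := by
                  gcongr
              _ = (↑m + 1) * R ^ (m + 1) * ε := by ring

lemma aux_abs_prod_pow_le {d : ℕ} (u : Fin d → ℝ) (α : Fin d → ℕ) {R : ℝ}
    (hR0 : 0 ≤ R) (hu : ∀ k, |u k| ≤ R) (s : Finset (Fin d)) :
    |∏ k ∈ s, u k ^ α k| ≤ R ^ (∑ k ∈ s, α k) := by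
  rw [Finset.abs_prod, ← Finset.prod_pow_eq_pow_sum]
  refine Finset.prod_le_prod (fun k _ => abs_nonneg _) (fun k _ => ?_)
  rw [abs_pow]
  exact pow_le_pow_left₀ (abs_nonneg _) (hu k) _

lemma aux_abs_prod_pow_sub_le {d : ℕ} (u v : Fin d → ℝ) (α : Fin d → ℕ) {R ε : ℝ}
    (hR : 1 ≤ R) (hε : 0 ≤ ε) (hu : ∀ k, |u k| ≤ R) (hv : ∀ k, |v k| ≤ R)
    (huv : ∀ k, |u k - v k| ≤ ε) (s : Finset (Fin d)) :
    |∏ k ∈ s, u k ^ α k - ∏ k ∈ s, v k ^ α k| ≤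
      (∑ k ∈ s, (α k : ℝ)) * R ^ (∑ k ∈ s, α k) * ε := by
  have hR0 : 0 ≤ R := le_trans zero_le_one hR
  induction s using Finset.induction with
  | empty => simp
  | @insert a s ha ih =>
    rw [Finset.prod_insert ha, Finset.prod_insert ha, Finset.sum_insert ha, Finset.sum_insert ha]
    have key : u a ^ α a * ∏ k ∈ s, u k ^ α k - v a ^ α a * ∏ k ∈ s, v k ^ α k
        = (u a ^ α a - v a ^ α a) * ∏ k ∈ s, u k ^ α k
          + v a ^ α a * (∏ k ∈ s, u k ^ α k - ∏ k ∈ s, v k ^ α k) := by ring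
    have h1 : |(u a ^ α a - v a ^ α a) * ∏ k ∈ s, u k ^ α k|
        ≤ (α a * R ^ α a * ε) * R ^ (∑ k ∈ s, α k) := by
      rw [abs_mul]
      exact mul_le_mul (aux_abs_pow_sub_pow_le (α a) hR (hu a) (hv a) (huv a))
        (aux_abs_prod_pow_le u α hR0 hu s) (abs_nonneg _) (by positivity)
    have h2 : |v a ^ α a * (∏ k ∈ s, u k ^ α k - ∏ k ∈ s, v k ^ α k)|
        ≤ R ^ α a * ((∑ k ∈ s, (α k : ℝ)) * R ^ (∑ k ∈ s, α k) * ε) := by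
      rw [abs_mul, abs_pow]
      exact mul_le_mul (pow_le_pow_left₀ (abs_nonneg _) (hv a) _) ih (abs_nonneg _) (by positivity)
    calc |u a ^ α a * ∏ k ∈ s, u k ^ α k - v a ^ α a * ∏ k ∈ s, v k ^ α k|
        ≤ (α a * R ^ α a * ε) * R ^ (∑ k ∈ s, α k)
          + R ^ α a * ((∑ k ∈ s, (α k : ℝ)) * R ^ (∑ k ∈ s, α k) * ε) := by
          rw [key]; exact le_trans (abs_add_le _ _) (add_le_add h1 h2)
      _ = ((α a : ℝ) + ∑ k ∈ s, (α k : ℝ)) * R ^ (α a + ∑ k ∈ s, α k) * ε := by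
          rw [pow_add]; ring

lemma aux_coord_abs_le_norm {d : ℕ} (v : EuclideanSpace ℝ (Fin d)) (k : Fin d) :
    |v k| ≤ ‖v‖ := by
  rw [EuclideanSpace.norm_eq, ← Real.sqrt_sq_eq_abs]
  apply Real.sqrt_le_sqrt
  have := Finset.single_le_sum (f := fun i => ‖v i‖ ^ 2) (fun i _ => sq_nonneg _)
    (Finset.mem_univ k)
  simpa [Real.norm_eq_abs, sq_abs] using this


/-- **Lipschitz continuity of local sample moments.** For a bounded kernel `K`
with bounded first-order partial derivatives, fixed `h > 0` and sample `X₁,…,Xₙ`, there is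
`L̃ > 0` such that `|s_n^α(x) − s_n^α(y)| ≤ L̃ ‖x − y‖` for all `x, y` in the convex hull of
the sample and all multi-indices `α` with `|α| ≤ 2`. -/
theorem sample_moments_lipschitz {d n : ℕ}
    (K : E d → ℝ) (hK_nonneg : ∀ z, 0 ≤ K z)
    (hK_bdd : ∃ C, ∀ z, K z ≤ C)
    (hK_diff : Differentiable ℝ K)
    (hK_d1 : ∃ C, ∀ z, ‖fderiv ℝ K z‖ ≤ C)
    (h : ℝ) (hh : 0 < h) (X : Fin n → E d) :
    ∃ L : ℝ, 0 < L ∧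
      ∀ α : Fin d → ℕ, (∑ k, α k) ≤ 2 →
        ∀ x ∈ convexHull ℝ (Set.range X), ∀ y ∈ convexHull ℝ (Set.range X),
          |snMoment K h X α x - snMoment K h X α y| ≤ L * ‖x - y‖ := by
  obtain ⟨C, hC⟩ := hK_bdd
  have hC0 : 0 ≤ C := le_trans (hK_nonneg 0) (hC 0)
  obtain ⟨C₁, hC₁⟩ := hK_d1
  have hC₁0 : 0 ≤ C₁ := le_trans (norm_nonneg _) (hC₁ 0)
  have hKlip : ∀ u v : E d, |K u - K v| ≤ C₁ * ‖u - v‖ := by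
    intro u v
    have := Convex.norm_image_sub_le_of_norm_fderiv_le (f := K) (s := Set.univ) (C := C₁)
      (fun z _ => hK_diff.differentiableAt) (fun z _ => hC₁ z) convex_univ
      (Set.mem_univ v) (Set.mem_univ u)
    simpa [Real.norm_eq_abs] using this
  have hSb : Bornology.IsBounded (convexHull ℝ (Set.range X)) :=
    isBounded_convexHull.2 (Set.finite_range X).isBounded
  obtain ⟨M, hM⟩ := isBounded_iff_forall_norm_le.1 hSb
  set R : ℝ := max (M + M) 1 with hRdef
  have hR1 : 1 ≤ R := le_max_right _ _
  have hR0 : 0 ≤ R := le_trans zero_le_one hR1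
  have hXS : ∀ i, X i ∈ convexHull ℝ (Set.range X) :=
    fun i => subset_convexHull ℝ _ (Set.mem_range_self i)
  have hXx : ∀ (i : Fin n), ∀ x ∈ convexHull ℝ (Set.range X), ‖X i - x‖ ≤ R := by
    intro i x hx
    calc ‖X i - x‖ ≤ ‖X i‖ + ‖x‖ := norm_sub_le _ _
      _ ≤ M + M := add_le_add (hM _ (hXS i)) (hM _ hx)
      _ ≤ R := le_max_left _ _
  set Hc : ℝ := (max h⁻¹ 1) ^ 2 with hHc
  have hHc0 : 0 ≤ Hc := by positivity
  set D : ℝ := Hc * ((h ^ d)⁻¹ * (C₁ * (h⁻¹ * 1)) * R ^ 2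
      + (h ^ d)⁻¹ * C * (2 * R ^ 2 * 1)) with hD
  have hD0 : 0 ≤ D := by positivity
  refine ⟨D + 1, by linarith, ?_⟩
  intro α hα x hx y hy
  set m := ∑ k, α k with hm
  have hnorm0 : (0:ℝ) ≤ ‖x - y‖ := norm_nonneg _
  have c_nonneg : (0:ℝ) ≤ (h ^ m)⁻¹ := by positivity
  have c_le : (h ^ m)⁻¹ ≤ Hc := by
    rw [← inv_pow, hHc]
    calc (h⁻¹) ^ m ≤ (max h⁻¹ 1) ^ m :=
          pow_le_pow_left₀ (inv_nonneg.2 hh.le) (le_max_left _ _) m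
      _ ≤ (max h⁻¹ 1) ^ 2 := pow_le_pow_right₀ (le_max_right _ _) hα
  have hterm : ∀ i : Fin n,
      |Kh K h (X i - x) * (h ^ m)⁻¹ * ∏ k, (X i k - x k) ^ α k
        - Kh K h (X i - y) * (h ^ m)⁻¹ * ∏ k, (X i k - y k) ^ α k| ≤ D * ‖x - y‖ := by
    intro i
    have hcoordx : ∀ k, |X i k - x k| ≤ R := by
      intro k
      have h1 := aux_coord_abs_le_norm (X i - x) k
      have h2 : (X i - x) k = X i k - x k := rfl
      rw [h2] at h1
      exact h1.trans (hXx i x hx)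
    have hcoordy : ∀ k, |X i k - y k| ≤ R := by
      intro k
      have h1 := aux_coord_abs_le_norm (X i - y) k
      have h2 : (X i - y) k = X i k - y k := rfl
      rw [h2] at h1
      exact h1.trans (hXx i y hy)
    have huv : ∀ k, |(X i k - x k) - (X i k - y k)| ≤ ‖x - y‖ := by
      intro k
      have h1 := aux_coord_abs_le_norm (x - y) k
      have h2 : (x - y) k = x k - y k := rfl
      rw [h2] at h1
      have h3 : (X i k - x k) - (X i k - y k) = -(x k - y k) := by ring
      rw [h3, abs_neg]
      exact h1
    have hPx : |∏ k, (X i k - x k) ^ α k| ≤ R ^ 2 := by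
      calc |∏ k, (X i k - x k) ^ α k| ≤ R ^ m :=
            aux_abs_prod_pow_le _ α hR0 hcoordx Finset.univ
        _ ≤ R ^ 2 := pow_le_pow_right₀ hR1 hα
    have hP : |∏ k, (X i k - x k) ^ α k - ∏ k, (X i k - y k) ^ α k|
        ≤ 2 * R ^ 2 * ‖x - y‖ := by
      have h1 := aux_abs_prod_pow_sub_le (fun k => X i k - x k) (fun k => X i k - y k) α
        hR1 hnorm0 hcoordx hcoordy huv Finset.univ
      refine h1.trans ?_
      have h2 : (∑ k, (α k : ℝ)) ≤ 2 := by
        rw [← Nat.cast_sum]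
        exact_mod_cast hα
      have h3 : R ^ m ≤ R ^ 2 := pow_le_pow_right₀ hR1 hα
      have h4 : (0:ℝ) ≤ ∑ k, (α k : ℝ) :=
        Finset.sum_nonneg fun k _ => Nat.cast_nonneg _
      rw [← hm]
      exact mul_le_mul_of_nonneg_right
        (mul_le_mul h2 h3 (by positivity) (by norm_num)) hnorm0
    have hKd : |Kh K h (X i - x) - Kh K h (X i - y)|
        ≤ (h ^ d)⁻¹ * (C₁ * (h⁻¹ * ‖x - y‖)) := by
      show |(h ^ d)⁻¹ * K (h⁻¹ • (X i - x)) - (h ^ d)⁻¹ * K (h⁻¹ • (X i - y))|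
        ≤ (h ^ d)⁻¹ * (C₁ * (h⁻¹ * ‖x - y‖))
      rw [← mul_sub, abs_mul, abs_inv, abs_pow, abs_of_pos hh]
      apply mul_le_mul_of_nonneg_left _ (by positivity)
      refine (hKlip _ _).trans ?_
      apply mul_le_mul_of_nonneg_left _ hC₁0
      have : h⁻¹ • (X i - x) - h⁻¹ • (X i - y) = h⁻¹ • (y - x) := by
        rw [← smul_sub]
        congr 1
        abel
      rw [this, norm_smul, Real.norm_eq_abs, abs_of_pos (inv_pos.2 hh), norm_sub_rev]
    have hKy : |Kh K h (X i - y)| ≤ (h ^ d)⁻¹ * C := by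
      show |(h ^ d)⁻¹ * K (h⁻¹ • (X i - y))| ≤ (h ^ d)⁻¹ * C
      rw [abs_mul, abs_inv, abs_pow, abs_of_pos hh,
        abs_of_nonneg (hK_nonneg _)]
      exact mul_le_mul_of_nonneg_left (hC _) (by positivity)
    have split : Kh K h (X i - x) * (h ^ m)⁻¹ * ∏ k, (X i k - x k) ^ α k
        - Kh K h (X i - y) * (h ^ m)⁻¹ * ∏ k, (X i k - y k) ^ α k
        = (h ^ m)⁻¹ * ((Kh K h (X i - x) - Kh K h (X i - y)) * ∏ k, (X i k - x k) ^ α k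
            + Kh K h (X i - y) * (∏ k, (X i k - x k) ^ α k - ∏ k, (X i k - y k) ^ α k)) := by
      ring
    calc |Kh K h (X i - x) * (h ^ m)⁻¹ * ∏ k, (X i k - x k) ^ α k
        - Kh K h (X i - y) * (h ^ m)⁻¹ * ∏ k, (X i k - y k) ^ α k|
        = (h ^ m)⁻¹ * |(Kh K h (X i - x) - Kh K h (X i - y)) * ∏ k, (X i k - x k) ^ α k
            + Kh K h (X i - y) * (∏ k, (X i k - x k) ^ α k - ∏ k, (X i k - y k) ^ α k)| := by
          rw [split, abs_mul, abs_of_nonneg c_nonneg]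
      _ ≤ (h ^ m)⁻¹ * (|Kh K h (X i - x) - Kh K h (X i - y)| * |∏ k, (X i k - x k) ^ α k|
            + |Kh K h (X i - y)| * |∏ k, (X i k - x k) ^ α k - ∏ k, (X i k - y k) ^ α k|) := by
          apply mul_le_mul_of_nonneg_left _ c_nonneg
          refine (abs_add_le _ _).trans ?_
          rw [abs_mul, abs_mul]
      _ ≤ Hc * ((h ^ d)⁻¹ * (C₁ * (h⁻¹ * ‖x - y‖)) * R ^ 2
            + (h ^ d)⁻¹ * C * (2 * R ^ 2 * ‖x - y‖)) := by
          apply mul_le_mul c_le _ _ hHc0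
          · exact add_le_add
              (mul_le_mul hKd hPx (abs_nonneg _) (by positivity))
              (mul_le_mul hKy hP (abs_nonneg _) (by positivity))
          · exact add_nonneg (mul_nonneg (abs_nonneg _) (abs_nonneg _))
              (mul_nonneg (abs_nonneg _) (abs_nonneg _))
      _ = D * ‖x - y‖ := by rw [hD]; ring
  have hsum : snMoment K h X α x - snMoment K h X α y
      = (n : ℝ)⁻¹ * ∑ i, (Kh K h (X i - x) * (h ^ m)⁻¹ * ∏ k, (X i k - x k) ^ α k
        - Kh K h (X i - y) * (h ^ m)⁻¹ * ∏ k, (X i k - y k) ^ α k) := by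
    rw [snMoment, snMoment, ← mul_sub, Finset.sum_sub_distrib, ← hm]
  calc |snMoment K h X α x - snMoment K h X α y|
      = (n : ℝ)⁻¹ * |∑ i, (Kh K h (X i - x) * (h ^ m)⁻¹ * ∏ k, (X i k - x k) ^ α k
        - Kh K h (X i - y) * (h ^ m)⁻¹ * ∏ k, (X i k - y k) ^ α k)| := by
        rw [hsum, abs_mul, abs_inv, Nat.abs_cast]
    _ ≤ (n : ℝ)⁻¹ * ((n : ℝ) * (D * ‖x - y‖)) := by
        apply mul_le_mul_of_nonneg_left _ (by positivity)
        refine (Finset.abs_sum_le_sum_abs _ _).trans ?_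
        calc ∑ i, |Kh K h (X i - x) * (h ^ m)⁻¹ * ∏ k, (X i k - x k) ^ α k
            - Kh K h (X i - y) * (h ^ m)⁻¹ * ∏ k, (X i k - y k) ^ α k|
            ≤ ∑ _i : Fin n, D * ‖x - y‖ := Finset.sum_le_sum fun i _ => hterm i
          _ = (n : ℝ) * (D * ‖x - y‖) := by
            rw [Finset.sum_const, Finset.card_univ, Fintype.card_fin, nsmul_eq_mul]
    _ ≤ D * ‖x - y‖ := by
        rcases Nat.eq_zero_or_pos n with hn | hn
        · simp [hn]
          positivity
        · rw [← mul_assoc, inv_mul_cancel₀ (by exact_mod_cast hn.ne' : (n:ℝ) ≠ 0), one_mul]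
    _ ≤ (D + 1) * ‖x - y‖ := by
        apply mul_le_mul_of_nonneg_right _ hnorm0
        linarith


end
end

section
/- Let K : ℝ^d → [0,∞) be a rotationally symmetric kernel K(y) = c_{k,d} k(‖y‖²) with differentiable profile k, set g(t) := −k'(t) and G(y) := c_{g,d} g(‖y‖²) with normalization constant c_{g,d}. For a sample X₁,…,Xₙ ∈ ℝ^d and h > 0 define the kernel density estimators f̂_{h,K}(x) := (c_{k,d}/(n h^d)) Σᵢ k(‖(Xᵢ−x)/h‖²) and f̂_{h,G}(x) := (c_{g,d}/(n h^d)) Σᵢ g(‖(Xᵢ−x)/h‖²), and the mean shift m_{h,G}(x) := ( Σᵢ Xᵢ g(‖(Xᵢ−x)/h‖²) ) / ( Σᵢ g(‖(Xᵢ−x)/h‖²) ) − x (defined whenever the denominator is positive). Then for every x with Σᵢ g(‖(Xᵢ−x)/h‖²) > 0, the gradient of the kernel density estimator satisfies ∇f̂_{h,K}(x) = f̂_{h,G}(x) · (2 c_{k,d} / (h² c_{g,d})) · m_{h,G}(x). -/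
open MeasureTheory Matrix Filter Topology Real

noncomputable section

set_option maxHeartbeats 1000000 in
/-- **mean shift identity.** For a rotationally symmetric kernel with profile
`k`, `g = −k'`, the gradient of the kernel density estimator satisfies
`∇f̂_{h,K}(x) = f̂_{h,G}(x) · (2c_{k,d}/(h² c_{g,d})) · m_{h,G}(x)`. -/
theorem mean_shift_gradient {d n : ℕ}
    (k : ℝ → ℝ) (hk : Differentiable ℝ k)
    (g : ℝ → ℝ) (hg : ∀ t, g t = -deriv k t)
    (K : E d → ℝ) (ck : ℝ) (hck : 0 < ck) (hK : ∀ y : E d, K y = ck * k (‖y‖ ^ 2))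
    (G : E d → ℝ) (cg : ℝ) (hcg : 0 < cg) (hG : ∀ y : E d, G y = cg * g (‖y‖ ^ 2))
    (h : ℝ) (hh : 0 < h) (X : Fin n → E d) (x : E d)
    (hden : 0 < ∑ i, g (‖h⁻¹ • (X i - x)‖ ^ 2)) :
    gradient (fun y => ck / (n * h ^ d) * ∑ i, k (‖h⁻¹ • (X i - y)‖ ^ 2)) x =
      ((cg / (n * h ^ d) * ∑ i, g (‖h⁻¹ • (X i - x)‖ ^ 2)) * (2 * ck / (h ^ 2 * cg))) •
        ((∑ i, g (‖h⁻¹ • (X i - x)‖ ^ 2))⁻¹ •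
            (∑ i, g (‖h⁻¹ • (X i - x)‖ ^ 2) • X i) - x) := by
  set t : Fin n → ℝ := fun i => ‖h⁻¹ • (X i - x)‖ ^ 2 with ht
  set c : ℝ := ck / (n * h ^ d) with hc
  -- the fderiv of each summand
  have hq : ∀ i : Fin n, HasFDerivAt (fun y : E d => k (‖h⁻¹ • (X i - y)‖ ^ 2))
      (deriv k (t i) • (2 • (innerSL ℝ (h⁻¹ • (X i - x))).comp
        (h⁻¹ • (0 - ContinuousLinearMap.id ℝ (E d))))) x := by
    intro i
    have h1 : HasFDerivAt (fun y : E d => h⁻¹ • (X i - y))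
        (h⁻¹ • (0 - ContinuousLinearMap.id ℝ (E d))) x :=
      ((hasFDerivAt_const (X i) x).sub (hasFDerivAt_id x)).const_smul h⁻¹
    have h2 := h1.norm_sq
    exact (hk (t i)).hasDerivAt.comp_hasFDerivAt x h2
  have hsum : HasFDerivAt (fun y : E d => c * ∑ i, k (‖h⁻¹ • (X i - y)‖ ^ 2))
      (c • ∑ i, deriv k (t i) • (2 • (innerSL ℝ (h⁻¹ • (X i - x))).comp
        (h⁻¹ • (0 - ContinuousLinearMap.id ℝ (E d))))) x :=
    (HasFDerivAt.fun_sum (fun i _ => hq i)).const_mul c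
  -- the gradient vector
  set V : E d := (2 * ck / (↑n * h ^ d * h ^ 2)) • ∑ i, g (t i) • (X i - x) with hV
  have hgrad : HasGradientAt (fun y : E d => c * ∑ i, k (‖h⁻¹ • (X i - y)‖ ^ 2)) V x := by
    rw [hasGradientAt_iff_hasFDerivAt]
    refine hsum.congr_fderiv ?_
    symm
    ext w
    simp only [InnerProductSpace.toDual_apply_apply, hV, real_inner_smul_left, sum_inner,
      ContinuousLinearMap.coe_smul', Pi.smul_apply, ContinuousLinearMap.coe_sum',
      Finset.sum_apply, ContinuousLinearMap.coe_comp', Function.comp_apply,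
      ContinuousLinearMap.coe_sub', ContinuousLinearMap.coe_zero,
      ContinuousLinearMap.coe_id', Pi.sub_apply, Pi.zero_apply, id_eq,
      ContinuousLinearMap.smul_apply, innerSL_apply_apply, real_inner_smul_left, hg,
      smul_eq_mul, inner_smul_left, map_inv₀, conj_trivial, zero_sub, inner_neg_right]
    rw [Finset.mul_sum, Finset.mul_sum]
    refine Finset.sum_congr rfl fun i _ => ?_
    have hh' : (h : ℝ) ≠ 0 := ne_of_gt hh
    field_simp
    rw [hc]
    simp only [ContinuousLinearMap.neg_apply, ContinuousLinearMap.id_apply, inner_smul_right,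
      inner_neg_right, nsmul_eq_mul]
    have hn0 : (n : ℝ) ≠ 0 := by
      exact Nat.cast_ne_zero.mpr (Nat.pos_of_ne_zero (fun h0 => (h0 ▸ i).elim0)).ne'
    field_simp
    ring
  rw [hgrad.gradient, hV]
  have hcg' : cg ≠ 0 := ne_of_gt hcg
  have hh' : (h : ℝ) ≠ 0 := ne_of_gt hh
  have hn : n ≠ 0 := by rintro rfl; simp at hden
  have hn' : (n : ℝ) ≠ 0 := Nat.cast_ne_zero.mpr hn
  obtain ⟨u, hu⟩ : ∃ u : Fin n → ℝ, ∀ i, g (‖h⁻¹ • (X i - x)‖ ^ 2) = u i :=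
    ⟨_, fun _ => rfl⟩
  have hut : ∀ i, g (t i) = u i := hu
  simp only [hu, hut]
  have hS : (∑ i, u i) ≠ 0 := by
    refine ne_of_gt ?_
    simpa only [hu] using hden
  have hsplit : (∑ i, u i • (X i - x)) = (∑ i, u i • X i) - (∑ i, u i) • x := by
    simp [smul_sub, Finset.sum_sub_distrib, ← Finset.sum_smul]
  rw [hsplit, smul_sub, smul_sub, smul_smul, smul_smul]
  have hpd : (h:ℝ) ^ d ≠ 0 := pow_ne_zero d hh'
  have e1 : (cg / (↑n * h ^ d) * ∑ i, u i) * (2 * ck / (h ^ 2 * cg)) * (∑ i, u i)⁻¹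
      = 2 * ck / (↑n * h ^ d * h ^ 2) := by
    field_simp
  have e2 : (cg / (↑n * h ^ d) * ∑ i, u i) * (2 * ck / (h ^ 2 * cg))
      = 2 * ck / (↑n * h ^ d * h ^ 2) * ∑ i, u i := by
    field_simp
  rw [e1, e2]


end
end
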